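/- For every n ≥ 1, every k ≥ 1 and every x = (x_1,…,x_k) ∈ ℚ^k, one has f_{2n+1}(x) = Σ_{j=0}^n (−1)^j A_{2j+1} C(2n+1, 2j+1) f_1(x)^{2j+1} f_{2n−2j}(x), where C(a,b) denotes the binomial coefficient. -/

import Mathlib

open Finset PowerSeries

/-- The `m`-th power sum `p_m(x) = Σ_i x_i^m`. -/
def psum {k : ℕ} (m : ℕ) (x : Fin k → ℚ) : ℚ := ∑ i, x i ^ m

/-- The weight function `φ_U` on partitions of `t`. -/
noncomputable def phiU (t : ℕ) (μ : Nat.Partition t) : ℚ :=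
  ((2 * t + 1).factorial : ℚ) * 4 ^ t *
    ∏ j ∈ Finset.Icc 1 t,
      (1 / ((μ.parts.count j).factorial : ℚ)) *
        (bernoulli (2 * j) / ((2 * j) * (2 * j).factorial)) ^ (μ.parts.count j)

/-- `u_{2t}(x) = Σ_{λ⊢t} φ_U(λ) Π_j p_{2j}(x)^{m_j}`. -/
noncomputable def u2 {k : ℕ} (t : ℕ) (x : Fin k → ℚ) : ℚ :=
  ∑ μ : Nat.Partition t,
    phiU t μ * ∏ j ∈ Finset.Icc 1 t, (psum (2 * j) x) ^ (μ.parts.count j)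

/-- `ũ_{2t}(x) = Σ_{λ⊢t} φ_U(λ) Π_j (−p_{2j}(x))^{m_j}`. -/
noncomputable def ut2 {k : ℕ} (t : ℕ) (x : Fin k → ℚ) : ℚ :=
  ∑ μ : Nat.Partition t,
    phiU t μ * ∏ j ∈ Finset.Icc 1 t, (-(psum (2 * j) x)) ^ (μ.parts.count j)

/-- `P_n(x) = Σ_{∅≠S⊆{1,…,k}} (−1)^{|S|−1} (Σ_{i∈S} x_i)^n`. -/
def Pn {k : ℕ} (n : ℕ) (x : Fin k → ℚ) : ℚ :=
  ∑ S ∈ (Finset.univ : Finset (Fin k)).powerset.erase ∅,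
    (-1 : ℚ) ^ (S.card - 1) * (∑ i ∈ S, x i) ^ n

/-- `T_n(x) = Σ_{|a|=n} (n!/Π a_i!) Π_i x_i^{a_i}/(a_i+1)`. -/
def Tpoly {k : ℕ} (n : ℕ) (x : Fin k → ℚ) : ℚ :=
  ∑ a ∈ Finset.Nat.antidiagonalTuple k n,
    ((n.factorial : ℚ) / ∏ i, ((a i).factorial : ℚ)) * ∏ i, x i ^ (a i) / (a i + 1)

/-- `f_n(x) = Σ_{|a|=n} (n!/Π a_i!) Π_i (−1)^{a_i} B_{a_i} x_i^{a_i}`. -/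
noncomputable def fpoly {k : ℕ} (n : ℕ) (x : Fin k → ℚ) : ℚ :=
  ∑ a ∈ Finset.Nat.antidiagonalTuple k n,
    ((n.factorial : ℚ) / ∏ i, ((a i).factorial : ℚ)) *
      ∏ i, (-1) ^ (a i) * bernoulli (a i) * x i ^ (a i)

/-- The tangent (zig-zag) numbers `A_{2j+1}`. -/
noncomputable def tangentA (j : ℕ) : ℚ :=
  (-1) ^ j * 2 ^ (2 * j + 2) * (2 ^ (2 * j + 2) - 1) * bernoulli (2 * j + 2) / (2 * j + 2)

noncomputable def BPS : ℚ⟦X⟧ := bernoulliPowerSeries ℚ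
noncomputable def EXP : ℚ⟦X⟧ := PowerSeries.exp ℚ

lemma coeff_BPS (n : ℕ) : coeff n BPS = bernoulli n / n.factorial := by
  simp [BPS, bernoulliPowerSeries]

lemma coeff_EXP (n : ℕ) : coeff n EXP = 1 / n.factorial := by
  simp [EXP, PowerSeries.coeff_exp]

lemma bern_odd {n : ℕ} (h : Odd n) (h1 : 1 < n) : bernoulli n = 0 := by
  rw [bernoulli_eq_bernoulli'_of_ne_one (by omega), bernoulli'_eq_zero_of_odd h h1]

noncomputable def tanhPS : ℚ⟦X⟧ :=
  PowerSeries.mk fun m =>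
    2 ^ (m+1) * (2 ^ (m+1) - 1) * bernoulli (m+1) / (m+1).factorial
      + (if m = 0 then 1 else 0)

lemma coeff_tanh_even (i : ℕ) : coeff (2*i) tanhPS = 0 := by
  rcases Nat.eq_zero_or_pos i with rfl | hi
  · simp [tanhPS, bernoulli_one]; norm_num
  · have : bernoulli (2*i+1) = 0 := bern_odd ⟨i, by ring⟩ (by omega)
    simp [tanhPS, this, hi.ne']

lemma coeff_tanh_odd (j : ℕ) : coeff (2*j+1) tanhPS =
    (-1)^j * tangentA j / (2*j+1).factorial := by
  simp only [tanhPS, coeff_mk, tangentA, if_neg (by omega : ¬ 2*j+1 = 0), add_zero]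
  rw [show 2*j+1+1 = 2*j+2 from rfl]
  have h1 : ((2*j+2).factorial : ℚ) = (2*↑j+2) * (2*j+1).factorial := by
    rw [show 2*j+2 = (2*j+1)+1 from rfl, Nat.factorial_succ]; push_cast; ring
  have h2 : ((2*j+1).factorial : ℚ) ≠ 0 := Nat.cast_ne_zero.2 (Nat.factorial_ne_zero _)
  have h3 : ((2:ℚ)*j+2) ≠ 0 := by positivity
  rcases Nat.even_or_odd j with hj | hj
  · rw [hj.neg_one_pow]; field_simp [h1]; rw [h1]; ring
  · rw [hj.neg_one_pow]; field_simp [h1]; rw [h1]; ring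

noncomputable def C2 : ℚ⟦X⟧ := rescale 2 BPS + X

lemma coeff_C2 (n : ℕ) : coeff n C2 =
    2^n * bernoulli n / n.factorial + (if n = 1 then 1 else 0) := by
  simp [C2, coeff_rescale, coeff_BPS, PowerSeries.coeff_X, mul_div_assoc]

lemma X_mul_tanh : X * tanhPS = rescale 2 C2 - C2 := by
  ext n
  cases n with
  | zero =>
    simp only [← coeff_zero_eq_constantCoeff_apply, map_sub, coeff_rescale, coeff_C2]
    norm_num
  | succ n =>
    rw [PowerSeries.coeff_succ_X_mul, map_sub, coeff_rescale, coeff_C2]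
    simp only [tanhPS, coeff_mk]
    have h2 : ((n+1).factorial : ℚ) ≠ 0 := Nat.cast_ne_zero.2 (Nat.factorial_ne_zero _)
    rcases Nat.eq_zero_or_pos n with rfl | hn
    · norm_num [bernoulli_one]
    · rw [if_neg (by omega : ¬ n = 0), if_neg (by omega : ¬ n+1 = 1)]
      field_simp
      ring

lemma constantCoeff_rescale_exp (a : ℚ) : constantCoeff (rescale a EXP) = 1 := by
  rw [← coeff_zero_eq_constantCoeff_apply, coeff_rescale, pow_zero, one_mul,
    coeff_zero_eq_constantCoeff_apply]
  exact constantCoeff_exp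

lemma rescale_exp_ne_zero (a : ℚ) : rescale a EXP ≠ 0 := by
  intro h
  have := constantCoeff_rescale_exp a
  rw [h, map_zero] at this
  norm_num at this

lemma C_two : (C (R := ℚ)) 2 = (2 : ℚ⟦X⟧) := by
  rw [show (2:ℚ) = 1+1 by norm_num, map_add, map_one]; norm_num

lemma C2_mul : C2 * (rescale 2 EXP - 1) = X * (rescale 2 EXP + 1) := by
  have hb : BPS * (EXP - 1) = X := bernoulliPowerSeries_mul_exp_sub_one ℚ
  have h2 : rescale 2 (BPS * (EXP - 1)) = rescale 2 X := by rw [hb]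
  rw [map_mul, map_sub, map_one, rescale_X, C_two] at h2
  rw [C2]
  linear_combination h2

lemma G1 : tanhPS * (rescale 2 EXP + 1) = rescale 2 EXP - 1 := by
  set E2 := rescale 2 EXP with hE2def
  have hE4 : E2 * E2 = rescale 4 EXP := by
    rw [hE2def, EXP, exp_mul_exp_eq_exp_add]; norm_num
  have hXne : (X : ℚ⟦X⟧) ≠ 0 := X_ne_zero
  have hE4ne : E2 * E2 - 1 ≠ 0 := by
    rw [hE4]
    intro h
    have : coeff 1 (rescale 4 EXP - 1) = 0 := by rw [h, map_zero]
    rw [map_sub, coeff_rescale, coeff_EXP] at this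
    norm_num [PowerSeries.coeff_one] at this
  have h1 : C2 * (E2 - 1) = X * (E2 + 1) := C2_mul
  have h2 : rescale 2 C2 * (E2 * E2 - 1) = 2 * X * (E2 * E2 + 1) := by
    have h := congrArg (rescale 2) C2_mul
    rw [map_mul, map_mul, map_sub, map_add, map_one, rescale_X, C_two,
      rescale_rescale] at h
    rw [hE4]
    norm_num at h
    exact h
  have h3 : X * tanhPS = rescale 2 C2 - C2 := X_mul_tanh
  have key : (X * (E2 * E2 - 1)) * (tanhPS * (E2 + 1)) = (X * (E2 * E2 - 1)) * (E2 - 1) := by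
    linear_combination ((E2*E2-1)*(E2+1))*h3 - (E2+1)^2*h1 + (E2+1)*h2
  exact mul_left_cancel₀ (mul_ne_zero hXne hE4ne) key

lemma rescale_zero_exp : rescale (0:ℚ) EXP = 1 := by
  rw [rescale_zero]
  simp only [RingHom.comp_apply, RingHom.coe_comp, Function.comp_apply]
  rw [EXP, constantCoeff_exp, map_one]

lemma G2 (s : ℚ) : rescale (s/2) tanhPS * (1 + rescale (-s) EXP) = 1 - rescale (-s) EXP := by
  have h := congrArg (rescale (s/2)) G1
  rw [map_mul, map_add, map_one, map_sub, map_one, rescale_rescale,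
    show 2 * (s/2) = s by ring] at h
  have hu : rescale s EXP * rescale (-s) EXP = 1 := by
    rw [EXP, exp_mul_exp_eq_exp_add, show s + -s = 0 by ring, ← EXP, rescale_zero_exp]
  have hne := rescale_exp_ne_zero s
  apply mul_left_cancel₀ hne
  calc rescale s EXP * (rescale (s/2) tanhPS * (1 + rescale (-s) EXP))
      = rescale (s/2) tanhPS * (rescale s EXP + rescale s EXP * rescale (-s) EXP) := by ring
    _ = rescale (s/2) tanhPS * (rescale s EXP + 1) := by rw [hu]
    _ = rescale s EXP - 1 := h
    _ = rescale s EXP * (1 - rescale (-s) EXP) := by rw [mul_sub, mul_one, hu]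

noncomputable def Gx {k : ℕ} (x : Fin k → ℚ) : ℚ⟦X⟧ := ∏ i, rescale (-(x i)) BPS

lemma rescale_neg_one_BPS : rescale (-1) BPS = BPS * EXP := by
  have hb : BPS * (EXP - 1) = X := bernoulliPowerSeries_mul_exp_sub_one ℚ
  have hBX : BPS * EXP = BPS + X := by linear_combination hb
  rw [hBX]
  ext n
  rw [coeff_rescale, map_add, coeff_BPS, PowerSeries.coeff_X]
  by_cases h1 : n = 1
  · subst h1; norm_num [bernoulli_one]
  · rw [if_neg h1, add_zero]
    rcases Nat.even_or_odd n with h | h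
    · rw [h.neg_one_pow, one_mul]
    · obtain ⟨m, hm⟩ := h
      have : bernoulli n = 0 := bern_odd ⟨m, hm⟩ (by omega)
      simp [this]

lemma prod_rescale_exp {ι : Type*} (s : Finset ι) (c : ι → ℚ) :
    ∏ i ∈ s, rescale (c i) EXP = rescale (∑ i ∈ s, c i) EXP := by
  induction s using Finset.cons_induction with
  | empty => rw [prod_empty, sum_empty, rescale_zero_exp]
  | cons a s ha ih => rw [prod_cons, sum_cons, ih, EXP, exp_mul_exp_eq_exp_add]

lemma Gx_neg {k : ℕ} (x : Fin k → ℚ) :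
    rescale (-1) (Gx x) = Gx x * rescale (-(∑ i, x i)) EXP := by
  rw [Gx, map_prod]
  calc (∏ i, rescale (-1) (rescale (-(x i)) BPS))
      = ∏ i, (rescale (-(x i)) BPS * rescale (-(x i)) EXP) := by
        refine prod_congr rfl fun i _ => ?_
        rw [rescale_rescale, show (-(x i)) * (-1) = (-1) * (-(x i)) by ring,
          ← rescale_rescale, rescale_neg_one_BPS, map_mul]
    _ = Gx x * rescale (-(∑ i, x i)) EXP := by
        rw [prod_mul_distrib, prod_rescale_exp, ← Finset.sum_neg_distrib, Gx]

lemma main_series {k : ℕ} (x : Fin k → ℚ) :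
    Gx x - rescale (-1) (Gx x) =
      rescale ((∑ i, x i)/2) tanhPS * (Gx x + rescale (-1) (Gx x)) := by
  rw [Gx_neg]
  linear_combination (-(Gx x)) * G2 (∑ i, x i)

lemma fpoly_eq {k : ℕ} (n : ℕ) (x : Fin k → ℚ) :
    fpoly n x = n.factorial * coeff n (Gx x) := by
  rw [Gx, coeff_prod, Finset.mul_sum, fpoly]
  refine Finset.sum_nbij' (fun a => Finsupp.equivFunOnFinite.symm a) (fun l => ⇑l) ?_ ?_ ?_ ?_ ?_
  · intro a ha
    rw [Finset.Nat.mem_antidiagonalTuple] at ha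
    simp [Finset.mem_finsuppAntidiag, ha]
  · intro l hl
    rw [Finset.mem_finsuppAntidiag] at hl
    rw [Finset.Nat.mem_antidiagonalTuple]
    exact hl.1
  · intro a _; rfl
  · intro l _; simp
  · intro a _
    have h1 : ∀ i : Fin k, coeff ((Finsupp.equivFunOnFinite.symm a) i)
        (rescale (-(x i)) BPS) = ((-1)^(a i) * bernoulli (a i) * (x i)^(a i)) / (a i).factorial := by
      intro i
      rw [show (Finsupp.equivFunOnFinite.symm a) i = a i from rfl, coeff_rescale, coeff_BPS,
        neg_pow]
      ring
    rw [Finset.prod_congr rfl (fun i _ => h1 i), Finset.prod_div_distrib]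
    ring

lemma fpoly_one {k : ℕ} (x : Fin k → ℚ) : fpoly 1 x = (∑ i, x i) / 2 := by
  have hcc : ∀ i : Fin k, constantCoeff (rescale (-(x i)) BPS) = 1 := by
    intro i
    rw [← coeff_zero_eq_constantCoeff_apply, coeff_rescale, coeff_BPS]
    simp [bernoulli_zero]
  have key : ∀ (s : Finset (Fin k)), coeff 1 (∏ i ∈ s, rescale (-(x i)) BPS)
      = ∑ i ∈ s, coeff 1 (rescale (-(x i)) BPS) := by
    intro s
    induction s using Finset.cons_induction with
    | empty => simp
    | cons a s ha ih =>
      rw [prod_cons, sum_cons, PowerSeries.coeff_one_mul, ih, hcc]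
      have : constantCoeff (∏ i ∈ s, rescale (-(x i)) BPS) = 1 := by
        rw [map_prod]
        exact Finset.prod_eq_one fun i _ => hcc i
      rw [this]
      ring
  rw [fpoly_eq, Gx, key]
  have : ∀ i : Fin k, coeff 1 (rescale (-(x i)) BPS) = x i / 2 := by
    intro i
    rw [coeff_rescale, coeff_BPS, bernoulli_one, Nat.factorial_one]
    push_cast
    ring
  rw [Finset.sum_congr rfl fun i _ => this i, ← Finset.sum_div]
  norm_num

lemma sum_range_two_mul (m : ℕ) (f : ℕ → ℚ) :
    ∑ p ∈ range (2*m), f p = ∑ i ∈ range m, (f (2*i) + f (2*i+1)) := by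
  induction m with
  | zero => simp
  | succ m ih =>
    rw [show 2*(m+1) = (2*m+1)+1 by ring, sum_range_succ, sum_range_succ,
      sum_range_succ, ih]
    ring

lemma coeff_extract {k : ℕ} (n : ℕ) (x : Fin k → ℚ) :
    coeff (2*n+1) (Gx x) = ∑ j ∈ range (n+1),
      ((∑ i, x i)/2)^(2*j+1) * ((-1)^j * tangentA j / (2*j+1).factorial)
        * coeff (2*(n-j)) (Gx x) := by
  have h := congrArg (coeff (2*n+1)) (main_series x)
  rw [map_sub, coeff_rescale (Gx x) (-1) (2*n+1),
    Odd.neg_one_pow (⟨n, by ring⟩ : Odd (2*n+1))] at h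
  simp only [PowerSeries.coeff_mul, Finset.Nat.sum_antidiagonal_eq_sum_range_succ_mk] at h
  rw [Nat.succ_eq_add_one, show 2*n+1+1 = 2*(n+1) by ring, sum_range_two_mul] at h
  have key : ∀ p ∈ range (n+1),
      (coeff (2*p) (rescale ((∑ i, x i)/2) tanhPS)
          * coeff (2*n+1-2*p) (Gx x + rescale (-1) (Gx x))
       + coeff (2*p+1) (rescale ((∑ i, x i)/2) tanhPS)
          * coeff (2*n+1-(2*p+1)) (Gx x + rescale (-1) (Gx x)))
      = 2 * (((∑ i, x i)/2)^(2*p+1) * ((-1)^p * tangentA p / (2*p+1).factorial)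
          * coeff (2*(n-p)) (Gx x)) := by
    intro p hp
    rw [mem_range] at hp
    rw [coeff_rescale, coeff_rescale, coeff_tanh_even, coeff_tanh_odd,
      show 2*n+1-(2*p+1) = 2*(n-p) by omega,
      map_add (coeff (2*(n-p))) (Gx x) (rescale (-1) (Gx x)),
      coeff_rescale (Gx x) (-1) (2*(n-p)),
      Even.neg_one_pow (⟨n-p, two_mul _⟩ : Even (2*(n-p)))]
    ring
  rw [Finset.sum_congr rfl key, ← Finset.mul_sum] at h
  linear_combination h / 2

theorem stmt12 (n k : ℕ) (hn : 1 ≤ n) (hk : 1 ≤ k) (x : Fin k → ℚ) :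
    fpoly (2 * n + 1) x =
      ∑ j ∈ Finset.range (n + 1),
        (-1 : ℚ) ^ j * tangentA j * ((2 * n + 1).choose (2 * j + 1) : ℚ) *
          (fpoly 1 x) ^ (2 * j + 1) * fpoly (2 * n - 2 * j) x := by
  rw [fpoly_eq (2*n+1) x, coeff_extract, Finset.mul_sum]
  refine Finset.sum_congr rfl fun j hj => ?_
  rw [mem_range] at hj
  rw [← fpoly_one, fpoly_eq (2*n-2*j) x, show 2*n-2*j = 2*(n-j) by omega]
  have hC : ((2*n+1).choose (2*j+1) : ℚ) * (2*j+1).factorial * (2*(n-j)).factorial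
      = (2*n+1).factorial := by
    have h := Nat.choose_mul_factorial_mul_factorial (show 2*j+1 ≤ 2*n+1 by omega)
    rw [show 2*n+1-(2*j+1) = 2*(n-j) by omega] at h
    exact_mod_cast h
  have h1 : ((2*j+1).factorial : ℚ) ≠ 0 := Nat.cast_ne_zero.2 (Nat.factorial_ne_zero _)
  field_simp
  linear_combination -((fpoly 1 x)^(2*j+1) * (tangentA j)
    * coeff (2*(n-j)) (Gx x)) * hC
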